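/- Fix constants α^{RT} > α^{DA} > 0, β^{DA} ∈ ℝ and a total demand D > 0. For each L ≥ 1, consider any load-side Cournot game with L loads whose positive demands sum to D. At its unique Nash equilibrium, the price spread equals λ^{DA} − λ^{RT} = −(α^{DA}/(L+1))·D, which is strictly negative for every L and tends to 0 as L → ∞; equivalently, the equilibrium total day-ahead load (1 − α^{DA}/((L+1)·α^{RT}))·D converges to the total load D as L → ∞. -/

import Mathlib

/-- Expenditure of player `l` in the load-side Cournot game: given demands `dem`, a
profile `p` of day-ahead participations (real-time participation of `k` is
`dem k - p k`), prices are `λ^{DA} = α^{DA}·(∑ k, p k) + β^{DA}` and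
`λ^{RT} = α^{RT}·(∑ k, dem k - p k) + λ^{DA}`, and the expenditure is
`λ^{DA}·p l + λ^{RT}·(dem l - p l)`. -/
noncomputable def expend {ι : Type*} [Fintype ι] (aDA aRT bDA : ℝ)
    (dem p : ι → ℝ) (l : ι) : ℝ :=
  (aDA * ∑ k, p k + bDA) * p l
    + (aRT * ∑ k, (dem k - p k) + (aDA * ∑ k, p k + bDA)) * (dem l - p l)

/-- Nash equilibrium of the load-side Cournot game. -/
def IsNash {ι : Type*} [Fintype ι] [DecidableEq ι] (aDA aRT bDA : ℝ)
    (dem p : ι → ℝ) : Prop :=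
  (∀ k, 0 ≤ p k) ∧
    ∀ l : ι, ∀ y : ℝ, 0 ≤ y →
      expend aDA aRT bDA dem p l ≤ expend aDA aRT bDA dem (Function.update p l y) l

-- auxiliary: per-player KKT conditions
lemma kkt {L : ℕ} (aDA aRT bDA D : ℝ) (h0 : 0 < aDA) (hlt : aDA < aRT)
    (dl : Fin L → ℝ) (hsum : ∑ l, dl l = D) (p : Fin L → ℝ)
    (hp0 : ∀ k, 0 ≤ p k)
    (hmin : ∀ l : Fin L, ∀ y : ℝ, 0 ≤ y →
      expend aDA aRT bDA dl p l ≤ expend aDA aRT bDA dl (Function.update p l y) l)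
    (l : Fin L) :
    0 ≤ aDA * dl l - aRT * (D - ∑ k, p k) - aRT * (dl l - p l) ∧
      (0 < p l → aDA * dl l - aRT * (D - ∑ k, p k) - aRT * (dl l - p l) ≤ 0) := by
  have haRT : 0 < aRT := h0.trans hlt
  set T := ∑ k ∈ Finset.univ.erase l, p k with hT
  have hS : ∑ k, p k = p l + T := (Finset.add_sum_erase _ p (Finset.mem_univ l)).symm
  have hRsum : ∑ k, (dl k - p k) = D - ∑ k, p k := by
    rw [Finset.sum_sub_distrib, hsum]
  have hupd : ∀ y : ℝ, ∑ k, Function.update p l y k = y + T := by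
    intro y
    rw [Finset.sum_update_of_mem (Finset.mem_univ l), hT, Finset.erase_eq]
  have hupd2 : ∀ y : ℝ, ∑ k, (dl k - Function.update p l y k) = D - (y + T) := by
    intro y; rw [Finset.sum_sub_distrib, hsum, hupd]
  set B : ℝ := aDA * dl l - aRT * (D - T) - aRT * dl l with hB
  have hineq : ∀ y : ℝ, 0 ≤ y → 0 ≤ (y - p l) * (aRT * (y + p l) + B) := by
    intro y hy
    have h := hmin l y hy
    simp only [expend, hupd, hupd2, Function.update_self] at h
    rw [hRsum, hS] at h
    have hfac : (y - p l) * (aRT * (y + p l) + B)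
        = ((aDA * (y + T) + bDA) * y
            + (aRT * (D - (y + T)) + (aDA * (y + T) + bDA)) * (dl l - y))
          - ((aDA * (p l + T) + bDA) * p l
            + (aRT * (D - (p l + T)) + (aDA * (p l + T) + bDA)) * (dl l - p l)) := by
      rw [hB]; ring
    linarith [h, hfac.ge, hfac.le]
  have hE : aDA * dl l - aRT * (D - ∑ k, p k) - aRT * (dl l - p l)
      = 2 * aRT * p l + B := by rw [hB, hS]; ring
  rw [hE]
  constructor
  · by_contra hc
    push_neg at hc
    set X := 2 * aRT * p l + B with hX
    have hεpos : 0 < -X / (2 * aRT) := by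
      apply div_pos (by linarith) (by linarith)
    have hfrac : aRT * (-X / (2 * aRT)) = -X / 2 := by
      field_simp
    have h := hineq (p l + -X / (2 * aRT)) (by have := hp0 l; linarith)
    nlinarith [h, hεpos, hfrac]
  · intro hpl
    by_contra hc
    push_neg at hc
    set X := 2 * aRT * p l + B with hX
    set ε := min (p l) (X / (2 * aRT)) with hε
    have hε1 : ε ≤ p l := min_le_left _ _
    have hε2 : ε ≤ X / (2 * aRT) := min_le_right _ _
    have hεpos : 0 < ε := lt_min hpl (div_pos hc (by linarith))
    have hfrac : aRT * (X / (2 * aRT)) = X / 2 := by field_simp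
    have h := hineq (p l - ε) (by linarith)
    nlinarith [h, hεpos, hε1, hε2, hfrac, mul_le_mul_of_nonneg_left hε2 haRT.le]


/-- Vanishing market power as the number of loads grows. Fix
`α^{RT} > α^{DA} > 0`, `β^{DA} ∈ ℝ` and total demand `D > 0`. For every `L ≥ 1` and any
Cournot game with `L` positive demands summing to `D`, at its (unique) Nash equilibrium
the spread equals `λ^{DA} - λ^{RT} = -(α^{DA}/(L+1))·D < 0`, and the total day-ahead
load equals `(1 - α^{DA}/((L+1) α^{RT}))·D`; as `L → ∞` the spread tends to `0` and the
total day-ahead load converges to `D`. -/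
theorem cournot_spread_vanishes_with_competition
    (aDA aRT bDA D : ℝ) (h0 : 0 < aDA) (hlt : aDA < aRT) (hD : 0 < D) :
    (∀ L : ℕ, 1 ≤ L → ∀ dl : Fin L → ℝ, (∀ k, 0 < dl k) → (∑ l, dl l = D) →
      ∀ p : Fin L → ℝ, IsNash aDA aRT bDA dl p →
        (aDA * (∑ l, p l) + bDA)
            - (aRT * (∑ l, (dl l - p l)) + (aDA * (∑ l, p l) + bDA))
          = -(aDA / ((L : ℝ) + 1)) * D ∧
        -(aDA / ((L : ℝ) + 1)) * D < 0 ∧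
        ∑ l, p l = (1 - aDA / (((L : ℝ) + 1) * aRT)) * D) ∧
    Filter.Tendsto (fun L : ℕ => -(aDA / ((L : ℝ) + 1)) * D)
      Filter.atTop (nhds 0) ∧
    Filter.Tendsto (fun L : ℕ => (1 - aDA / (((L : ℝ) + 1) * aRT)) * D)
      Filter.atTop (nhds D) := by
  have haRT : 0 < aRT := h0.trans hlt
  refine ⟨?_, ?_, ?_⟩
  · intro L hL dl hdl hsum p hp
    obtain ⟨hp0, hmin⟩ := hp
    have hkkt := fun l => kkt aDA aRT bDA D h0 hlt dl hsum p hp0 hmin l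
    have hRsum : ∑ k, (dl k - p k) = D - ∑ k, p k := by
      rw [Finset.sum_sub_distrib, hsum]
    set S : ℝ := ∑ k, p k with hSdef
    -- every player is interior
    have hpos : ∀ l, 0 < p l := by
      by_contra hc
      push_neg at hc
      obtain ⟨l, hl⟩ := hc
      have hl0 : p l = 0 := le_antisymm hl (hp0 l)
      have hA := (hkkt l).1
      rw [hl0] at hA
      have hRneg : D - S < 0 := by nlinarith [hdl l]
      have hterm : ∀ k, 0 < dl k - p k := by
        intro k
        rcases lt_or_ge 0 (p k) with hk | hk
        · have h1 := (hkkt k).1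
          have h2 := (hkkt k).2 hk
          have : aRT * (dl k - p k) = aDA * dl k - aRT * (D - S) := by linarith
          nlinarith [hdl k]
        · have : p k = 0 := le_antisymm hk (hp0 k)
          rw [this]; simpa using hdl k
      have hne : (Finset.univ : Finset (Fin L)).Nonempty := by
        have : Nonempty (Fin L) := Fin.pos_iff_nonempty.mp hL
        exact Finset.univ_nonempty
      have := Finset.sum_pos (fun k _ => hterm k) hne
      rw [hRsum] at this
      linarith
    have hEzero : ∀ l, aDA * dl l - aRT * (D - S) - aRT * (dl l - p l) = 0 :=
      fun l => le_antisymm ((hkkt l).2 (hpos l)) (hkkt l).1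
    have hsumE : ∑ l, (aDA * dl l - aRT * (D - S) - aRT * (dl l - p l)) = 0 :=
      Finset.sum_eq_zero fun l _ => hEzero l
    have e1 : ∑ l : Fin L, (aDA * dl l) = aDA * D := by rw [← Finset.mul_sum, hsum]
    have e2 : ∑ l : Fin L, (aRT * (dl l - p l)) = aRT * (D - S) := by
      rw [← Finset.mul_sum, hRsum]
    have e3 : ∑ _l : Fin L, (aRT * (D - S)) = (L : ℝ) * (aRT * (D - S)) := by
      rw [Finset.sum_const, Finset.card_univ, Fintype.card_fin, nsmul_eq_mul]
    have hexp : aDA * D - (L : ℝ) * (aRT * (D - S)) - aRT * (D - S) = 0 := by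
      rw [Finset.sum_sub_distrib, Finset.sum_sub_distrib, e1, e2, e3] at hsumE
      linarith
    have hkey : aRT * (D - S) * ((L : ℝ) + 1) = aDA * D := by linear_combination -hexp
    have hL1 : (0:ℝ) < (L : ℝ) + 1 := by positivity
    have hspread : aRT * (D - S) = aDA / ((L : ℝ) + 1) * D := by
      rw [div_mul_eq_mul_div, eq_div_iff (ne_of_gt hL1)]
      linear_combination hkey
    have hsplit : aDA / (((L : ℝ) + 1) * aRT) * D = D - S := by
      rw [div_mul_eq_mul_div,
        div_eq_iff (ne_of_gt (by positivity : (0:ℝ) < ((L : ℝ) + 1) * aRT))]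
      linear_combination -hkey
    refine ⟨?_, ?_, ?_⟩
    · rw [hRsum]
      linear_combination -hspread
    · have : 0 < aDA / ((L : ℝ) + 1) := div_pos h0 hL1
      nlinarith
    · linear_combination hsplit
  · have h1 : Filter.Tendsto (fun L : ℕ => ((L : ℝ) + 1)) Filter.atTop Filter.atTop :=
      Filter.tendsto_atTop_add_const_right _ 1 tendsto_natCast_atTop_atTop
    have h2 : Filter.Tendsto (fun L : ℕ => aDA / ((L : ℝ) + 1)) Filter.atTop (nhds 0) :=
      by exact Filter.Tendsto.div_atTop tendsto_const_nhds h1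
    have := (h2.neg).mul_const D
    simpa using this
  · have h1 : Filter.Tendsto (fun L : ℕ => ((L : ℝ) + 1) * aRT) Filter.atTop Filter.atTop :=
      by exact Filter.Tendsto.atTop_mul_const haRT (Filter.tendsto_atTop_add_const_right _ 1 tendsto_natCast_atTop_atTop)
    have h2 : Filter.Tendsto (fun L : ℕ => aDA / (((L : ℝ) + 1) * aRT)) Filter.atTop (nhds 0) :=
      by exact Filter.Tendsto.div_atTop tendsto_const_nhds h1
    have := ((tendsto_const_nhds (x := (1:ℝ))).sub h2).mul_const D
    simpa using this
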